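/- For every natural number m and every real x, ∫_ℝ exp(2πi p x) · exp(−π p²) · He_m(2√π · p) dp = i^m · exp(−π x²) · He_m(2√π · x), where He_m is the m-th (probabilists') Hermite polynomial and the integral is over p ∈ ℝ with Lebesgue measure. That is, the Hermite function p ↦ e^{−πp²} He_m(2√π p) is an eigenfunction of the Fourier transform with kernel e^{2πipx}, with eigenvalue i^m. -/

import Mathlib

open Polynomial MeasureTheory Filter
open scoped FourierTransform Real

noncomputable section HermiteFourierAux

namespace HermiteFourierAux

/-- The scaling constant `2√π`. -/
def cc : ℝ := 2 * Real.sqrt Real.pi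

lemma cc_pos : 0 < cc := by
  have := Real.sqrt_pos.mpr Real.pi_pos
  unfold cc; linarith

lemma cc_ne : cc ≠ 0 := cc_pos.ne'

lemma cc_sq : cc ^ 2 = 4 * Real.pi := by
  have h : Real.sqrt Real.pi ^ 2 = Real.pi := Real.sq_sqrt Real.pi_pos.le
  unfold cc; nlinarith [h]

/-- The real Hermite polynomial. -/
def H (m : ℕ) : Polynomial ℝ := (hermite m).map (algebraMap ℤ ℝ)

lemma aeval_hermite_eq (m : ℕ) (y : ℝ) :
    (aeval y (hermite m) : ℝ) = (H m).eval y := by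
  simp [H, eval_map, aeval_def]

lemma H_succ (m : ℕ) : H (m + 1) = X * H m - derivative (H m) := by
  unfold H
  rw [hermite_succ]
  simp [Polynomial.map_sub, Polynomial.map_mul, derivative_map]

lemma H_zero : H 0 = 1 := by simp [H, hermite_zero]

/-- The real Hermite function. -/
def g (m : ℕ) (p : ℝ) : ℝ := (H m).eval (cc * p) * Real.exp (-Real.pi * p ^ 2)

/-- The complex Hermite function. -/
def f (m : ℕ) (p : ℝ) : ℂ := (g m p : ℂ)

/-- The derivative (real version). -/
def dg (m : ℕ) (p : ℝ) : ℝ := 2 * Real.pi * p * g m p - cc * g (m + 1) p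

lemma integrable_pow_gauss (n : ℕ) :
    Integrable (fun x : ℝ => x ^ n * Real.exp (-Real.pi * x ^ 2)) := by
  have h : (-1 : ℝ) < (n : ℝ) := lt_of_lt_of_le (by norm_num) (Nat.cast_nonneg n)
  simpa [Real.rpow_natCast] using integrable_rpow_mul_exp_neg_mul_sq Real.pi_pos h

lemma integrable_poly_gauss (P : Polynomial ℝ) :
    Integrable (fun p : ℝ => P.eval p * Real.exp (-Real.pi * p ^ 2)) := by
  induction P using Polynomial.induction_on' with
  | add p q hp hq =>
      have := hp.add hq
      apply this.congr
      filter_upwards with x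
      simp [add_mul]
  | monomial n a =>
      have := (integrable_pow_gauss n).const_mul a
      apply this.congr
      filter_upwards with x
      simp [eval_monomial]
      ring

lemma integrable_g (m : ℕ) : Integrable (g m) := by
  have := integrable_poly_gauss ((H m).comp (C cc * X))
  apply this.congr
  filter_upwards with p
  simp [g, eval_comp]

lemma integrable_xg (m : ℕ) : Integrable (fun p => p * g m p) := by
  have := integrable_poly_gauss (X * (H m).comp (C cc * X))
  apply this.congr
  filter_upwards with p
  simp [g, eval_comp]
  ring

lemma integrable_dg (m : ℕ) : Integrable (dg m) := by
  have h1 := ((integrable_xg m).const_mul (2 * Real.pi)).sub ((integrable_g (m + 1)).const_mul cc)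
  apply h1.congr
  filter_upwards with p
  simp [dg]
  ring

lemma integrable_f (m : ℕ) : Integrable (f m) := (integrable_g m).ofReal

lemma smul_f_eq (m : ℕ) : (fun p : ℝ => p • f m p) = fun p : ℝ => ((p * g m p : ℝ) : ℂ) := by
  funext p
  simp [f, Complex.real_smul]

lemma integrable_smul_f (m : ℕ) : Integrable (fun p : ℝ => p • f m p) := by
  rw [smul_f_eq]; exact (integrable_xg m).ofReal

lemma hasDerivAt_g (m : ℕ) (p : ℝ) : HasDerivAt (g m) (dg m p) p := by
  have h1 : HasDerivAt (fun q : ℝ => Real.exp (-Real.pi * q ^ 2))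
      (Real.exp (-Real.pi * p ^ 2) * (-Real.pi * (2 * p))) p := by
    have hp : HasDerivAt (fun q : ℝ => -Real.pi * q ^ 2) (-Real.pi * (2 * p)) p := by
      simpa using (hasDerivAt_pow 2 p).const_mul (-Real.pi)
    simpa using hp.exp
  have h2 : HasDerivAt (fun q : ℝ => (H m).eval (cc * q))
      ((derivative (H m)).eval (cc * p) * cc) p := by
    have hlin : HasDerivAt (fun q : ℝ => cc * q) cc p := by
      simpa using (hasDerivAt_id p).const_mul cc
    exact (Polynomial.hasDerivAt (H m) (cc * p)).comp p hlin
  have h3 := h2.mul h1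
  have key : (derivative (H m)).eval (cc * p) * cc * Real.exp (-Real.pi * p ^ 2) +
      (H m).eval (cc * p) * (Real.exp (-Real.pi * p ^ 2) * (-Real.pi * (2 * p))) = dg m p := by
    have hd : (derivative (H m)).eval (cc * p)
        = cc * p * (H m).eval (cc * p) - (H (m + 1)).eval (cc * p) := by
      have : derivative (H m) = X * H m - H (m + 1) := by
        rw [H_succ]; ring
      rw [this]; simp
    rw [hd]
    unfold dg g
    linear_combination (eval (cc * p) (H m) * Real.exp (-Real.pi * p ^ 2) * p) * cc_sq
  rw [key] at h3
  exact h3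

lemma hasDerivAt_f (m : ℕ) (p : ℝ) : HasDerivAt (f m) ((dg m p : ℝ) : ℂ) p :=
  (hasDerivAt_g m p).ofReal_comp

lemma deriv_f (m : ℕ) : deriv (f m) = fun p => ((dg m p : ℝ) : ℂ) := by
  funext p
  exact (hasDerivAt_f m p).deriv

lemma differentiable_f (m : ℕ) : Differentiable ℝ (f m) :=
  fun p => (hasDerivAt_f m p).differentiableAt

lemma integrable_deriv_f (m : ℕ) : Integrable (deriv (f m)) := by
  rw [deriv_f]; exact (integrable_dg m).ofReal

/-- Pull a complex constant out of a Fourier integral. -/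
lemma fourier_const_mul (a : ℂ) (F : ℝ → ℂ) (ξ : ℝ) :
    (𝓕 (fun p : ℝ => a * F p)) ξ = a * (𝓕 F) ξ := by
  simp_rw [Real.fourier_real_eq_integral_exp_smul, smul_eq_mul, mul_left_comm _ a,
    integral_const_mul]

lemma fourier_comb {F G : ℝ → ℂ} (hF : Integrable F) (hG : Integrable G) (a b : ℂ) (ξ : ℝ) :
    (𝓕 (fun p : ℝ => a * F p - b * G p)) ξ = a * (𝓕 F) ξ - b * (𝓕 G) ξ := by
  simp_rw [Real.fourier_real_eq_integral_exp_smul, smul_eq_mul]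
  have hker : ∀ (K : ℝ → ℂ), Integrable K →
      Integrable (fun v : ℝ => Complex.exp ((-2 * Real.pi * v * ξ : ℝ) * Complex.I) * K v) := by
    intro K hK
    apply hK.bdd_mul
    · exact (Complex.continuous_exp.comp
        ((Complex.continuous_ofReal.comp (by continuity)).mul continuous_const)).aestronglyMeasurable
    · exact Filter.Eventually.of_forall (fun v => le_of_eq (Complex.norm_exp_ofReal_mul_I _))
  have h1 := hker F hF
  have h2 := hker G hG
  calc (∫ v : ℝ, Complex.exp ((-2 * Real.pi * v * ξ : ℝ) * Complex.I) * (a * F v - b * G v))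
      = ∫ v : ℝ, (a * (Complex.exp ((-2 * Real.pi * v * ξ : ℝ) * Complex.I) * F v)
          - b * (Complex.exp ((-2 * Real.pi * v * ξ : ℝ) * Complex.I) * G v)) := by
        congr 1; funext v; ring
    _ = a * (∫ v : ℝ, Complex.exp ((-2 * Real.pi * v * ξ : ℝ) * Complex.I) * F v)
          - b * (∫ v : ℝ, Complex.exp ((-2 * Real.pi * v * ξ : ℝ) * Complex.I) * G v) := by
        rw [integral_sub (h1.const_mul a) (h2.const_mul b), integral_const_mul, integral_const_mul]

lemma f_succ_eq (m : ℕ) : f (m + 1)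
    = fun p : ℝ => ((2 * Real.pi / cc : ℝ) : ℂ) * ((p * g m p : ℝ) : ℂ)
        - ((cc⁻¹ : ℝ) : ℂ) * ((dg m p : ℝ) : ℂ) := by
  funext p
  have h : g (m + 1) p = (2 * Real.pi / cc) * (p * g m p) - cc⁻¹ * dg m p := by
    unfold dg
    field_simp [cc_ne]
    ring
  rw [f, h]
  push_cast
  ring

lemma key (m : ℕ) : ∀ ξ : ℝ, (𝓕 (f m)) ξ = Complex.I ^ m * f m (-ξ) := by
  induction m with
  | zero =>
      intro ξ
      have hb : (0 : ℝ) < (1 : ℂ).re := by norm_num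
      have hgauss := fourier_gaussian_pi (b := 1) hb
      have hf0 : f 0 = fun p : ℝ => Complex.exp (-(Real.pi : ℂ) * 1 * (p : ℂ) ^ 2) := by
        funext p
        rw [f, g, H_zero]
        push_cast [Complex.ofReal_exp, Polynomial.eval_one]
        ring_nf
      rw [hf0, hgauss]
      simp only [Complex.one_cpow, one_div, inv_one, one_mul, pow_zero, Complex.ofReal_neg]
      ring_nf
  | succ m ih =>
      intro ξ
      have hA := Real.deriv_fourier (integrable_f m) (integrable_smul_f m)
      have hFT : 𝓕 (f m) = fun t : ℝ => Complex.I ^ m * f m (-t) := funext ih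
      have hderivL : deriv (𝓕 (f m)) ξ
          = Complex.I ^ m * (((dg m (-ξ) : ℝ) : ℂ) * (-1)) := by
        rw [hFT]
        have hcomp : HasDerivAt (fun t : ℝ => Complex.I ^ m * f m (-t))
            (Complex.I ^ m * (((dg m (-ξ) : ℝ) : ℂ) * (-1))) ξ := by
          have h1 : HasDerivAt (fun t : ℝ => f m (-t)) (((dg m (-ξ) : ℝ) : ℂ) * (-1)) ξ := by
            have hr : HasDerivAt (fun t : ℝ => g m (-t)) (dg m (-ξ) * (-1)) ξ := by
              have := (hasDerivAt_g m (-ξ)).comp ξ (hasDerivAt_neg ξ)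
              simpa [Function.comp_def] using this
            have := hr.ofReal_comp
            push_cast at this ⊢
            exact this
          exact h1.const_mul (Complex.I ^ m)
        exact hcomp.deriv
      have hrhs : (𝓕 (fun p : ℝ => (-2 * (Real.pi : ℂ) * Complex.I * (p : ℂ)) • f m p)) ξ
          = (-2 * (Real.pi : ℂ) * Complex.I) * (𝓕 (fun p : ℝ => ((p * g m p : ℝ) : ℂ))) ξ := by
        have hfun : (fun p : ℝ => (-2 * (Real.pi : ℂ) * Complex.I * (p : ℂ)) • f m p)
            = fun p : ℝ => (-2 * (Real.pi : ℂ) * Complex.I) * ((p * g m p : ℝ) : ℂ) := by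
          funext p
          simp only [smul_eq_mul, f]
          push_cast
          ring
        rw [hfun, fourier_const_mul]
      have E1 : (-2 * (Real.pi : ℂ) * Complex.I)
            * (𝓕 (fun p : ℝ => ((p * g m p : ℝ) : ℂ))) ξ
          = Complex.I ^ m * (((dg m (-ξ) : ℝ) : ℂ) * (-1)) := by
        rw [← hrhs, ← hderivL, hA]
      have E1' : (2 * (Real.pi : ℂ)) * (𝓕 (fun p : ℝ => ((p * g m p : ℝ) : ℂ))) ξ
          = -(Complex.I ^ m * ((dg m (-ξ) : ℝ) : ℂ) * Complex.I) := by
        linear_combination Complex.I * E1 +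
          (2 * (Real.pi : ℂ) * (𝓕 (fun p : ℝ => ((p * g m p : ℝ) : ℂ))) ξ) * Complex.I_sq
      have hB := Real.fourier_deriv (integrable_f m) (differentiable_f m)
        (integrable_deriv_f m)
      have E2 : (𝓕 (fun p : ℝ => ((dg m p : ℝ) : ℂ))) ξ
          = (2 * (Real.pi : ℂ) * Complex.I * (ξ : ℂ))
              * (Complex.I ^ m * ((g m (-ξ) : ℝ) : ℂ)) := by
        have h := congrFun hB ξ
        rw [deriv_f] at h
        rw [h, hFT, smul_eq_mul]
        rfl
      rw [f_succ_eq m]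
      rw [fourier_comb (F := fun p : ℝ => ((p * g m p : ℝ) : ℂ))
        (G := fun p : ℝ => ((dg m p : ℝ) : ℂ)) ((integrable_xg m).ofReal)
        ((integrable_dg m).ofReal) _ _ ξ]
      simp only [f, pow_succ]
      set A : ℂ := (𝓕 (fun p : ℝ => ((p * g m p : ℝ) : ℂ))) ξ with hAdef
      set B : ℂ := (𝓕 (fun p : ℝ => ((dg m p : ℝ) : ℂ))) ξ with hBdef
      push_cast
      linear_combination ((cc : ℂ))⁻¹ * E1' - ((cc : ℂ))⁻¹ * E2
  
end HermiteFourierAux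

end HermiteFourierAux

/-- The Hermite function `p ↦ e^{−πp²} He_m(2√π p)` is an eigenfunction of the Fourier
transform with kernel `e^{2πipx}`, with eigenvalue `iᵐ`. -/
theorem hermite_fourier_eigenfunction (m : ℕ) (x : ℝ) :
    ∫ p : ℝ, Complex.exp (2 * (Real.pi : ℂ) * Complex.I * (p : ℂ) * (x : ℂ)) *
        ((Real.exp (-Real.pi * p ^ 2) : ℝ) : ℂ) *
        ((Polynomial.aeval (2 * Real.sqrt Real.pi * p) (Polynomial.hermite m) : ℝ) : ℂ) =
      Complex.I ^ m * ((Real.exp (-Real.pi * x ^ 2) : ℝ) : ℂ) *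
        ((Polynomial.aeval (2 * Real.sqrt Real.pi * x) (Polynomial.hermite m) : ℝ) : ℂ) := by
  have hmain := HermiteFourierAux.key m (-x)
  rw [neg_neg] at hmain
  rw [Real.fourier_real_eq_integral_exp_smul] at hmain
  have h1 : (∫ v : ℝ, Complex.exp (((-2 * Real.pi * v * (-x) : ℝ) : ℂ) * Complex.I)
        • HermiteFourierAux.f m v)
      = ∫ p : ℝ, Complex.exp (2 * (Real.pi : ℂ) * Complex.I * (p : ℂ) * (x : ℂ)) *
        ((Real.exp (-Real.pi * p ^ 2) : ℝ) : ℂ) *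
        ((Polynomial.aeval (2 * Real.sqrt Real.pi * p) (Polynomial.hermite m) : ℝ) : ℂ) := by
    congr 1
    funext p
    rw [smul_eq_mul]
    have he : ((-2 * Real.pi * p * (-x) : ℝ) : ℂ) * Complex.I
        = 2 * (Real.pi : ℂ) * Complex.I * (p : ℂ) * (x : ℂ) := by push_cast; ring
    rw [he]
    simp only [HermiteFourierAux.f, HermiteFourierAux.g, HermiteFourierAux.aeval_hermite_eq,
      HermiteFourierAux.cc]
    push_cast
    ring
  rw [h1] at hmain
  rw [hmain]
  simp only [HermiteFourierAux.f, HermiteFourierAux.g, HermiteFourierAux.aeval_hermite_eq,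
    HermiteFourierAux.cc]
  push_cast
  ring
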